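/- Let P₁ and P₂ be finite partially ordered sets and let T : P₁ × P₂ → ℝ be a matrix of rank 2 (as a real matrix) that admits a factorization T = ∑_{i=1}^r a_i b_iᵀ for some r ∈ ℕ with a_i ∈ C(P₁) and b_i ∈ C(P₂). Then T admits such a factorization with exactly two terms: there exist a'₁, a'₂ ∈ C(P₁) and b'₁, b'₂ ∈ C(P₂) with T = a'₁ (b'₁)ᵀ + a'₂ (b'₂)ᵀ. -/

import Mathlib

open Matrix

/-- The order cone of a finite poset: nonnegative, nondecreasing real-valued functions. -/
def orderCone (P : Type*) [PartialOrder P] : Set (P → ℝ) :=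
  {f | (∀ x, 0 ≤ f x) ∧ ∀ ⦃x y : P⦄, x ≤ y → f x ≤ f y}

/-- a rank-two matrix with a finite ND factorization has an ND
factorization with exactly two terms. -/
theorem rank_two_implies_NDrank_two
    (P₁ P₂ : Type*) [Fintype P₁] [Fintype P₂] [PartialOrder P₁] [PartialOrder P₂]
    (T : Matrix P₁ P₂ ℝ) (hrank : T.rank = 2)
    (hT : ∃ (r : ℕ) (a : Fin r → P₁ → ℝ) (b : Fin r → P₂ → ℝ),
      (∀ i, a i ∈ orderCone P₁) ∧ (∀ i, b i ∈ orderCone P₂) ∧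
      ∀ x y, T x y = ∑ i, a i x * b i y) :
    ∃ (a' : Fin 2 → P₁ → ℝ) (b' : Fin 2 → P₂ → ℝ),
      (∀ i, a' i ∈ orderCone P₁) ∧ (∀ i, b' i ∈ orderCone P₂) ∧
      ∀ x y, T x y = ∑ i, a' i x * b' i y := by
  classical
  obtain ⟨r, a, b, ha, hb, hfac⟩ := hT
  set φ : (P₁ → ℝ) → ℝ := fun f => ∑ x, f x with hφdef
  -- basic order-cone facts
  have hcone_comb : ∀ g : Fin r → ℝ, (∀ i, 0 ≤ g i) →
      (fun x => ∑ i, a i x * g i) ∈ orderCone P₁ := by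
    intro g hg
    exact ⟨fun x => Finset.sum_nonneg fun i _ => mul_nonneg ((ha i).1 x) (hg i),
      fun x y hxy => Finset.sum_le_sum fun i _ =>
        mul_le_mul_of_nonneg_right ((ha i).2 hxy) (hg i)⟩
  have hcol_eq : ∀ y, Tᵀ y = fun x => ∑ i, a i x * b i y := fun y => funext fun x => hfac x y
  have hcol_cone : ∀ y, Tᵀ y ∈ orderCone P₁ := fun y => by
    rw [hcol_eq y]; exact hcone_comb _ fun i => (hb i).1 y
  have hdiff_cone : ∀ ⦃y y' : P₂⦄, y ≤ y' → Tᵀ y' - Tᵀ y ∈ orderCone P₁ := by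
    intro y y' hyy'
    have hde : Tᵀ y' - Tᵀ y = fun x => ∑ i, a i x * (b i y' - b i y) := by
      funext x
      simp only [Pi.sub_apply, hcol_eq, mul_sub, Finset.sum_sub_distrib]
    rw [hde]
    exact hcone_comb _ fun i => sub_nonneg.mpr ((hb i).2 hyy')
  have hzero_cone : (0 : P₁ → ℝ) ∈ orderCone P₁ := ⟨fun _ => le_refl 0, fun _ _ _ => le_refl 0⟩
  have hsmul_cone : ∀ (k : ℝ) (f : P₁ → ℝ), 0 ≤ k → f ∈ orderCone P₁ → k • f ∈ orderCone P₁ := by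
    intro k f hk hf
    exact ⟨fun x => mul_nonneg hk (hf.1 x), fun x y hxy => mul_le_mul_of_nonneg_left (hf.2 hxy) hk⟩
  have hφpos : ∀ f, f ∈ orderCone P₁ → f ≠ 0 → 0 < φ f := by
    intro f hf hf0
    obtain ⟨x', hx'⟩ := Function.ne_iff.mp hf0
    exact Finset.sum_pos' (fun x _ => hf.1 x)
      ⟨x', Finset.mem_univ x', lt_of_le_of_ne (hf.1 x') (Ne.symm hx')⟩
  have hφ_smul_add : ∀ (k l : ℝ) (f g : P₁ → ℝ), φ (k • f + l • g) = k * φ f + l * φ g := by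
    intro k l f g
    simp [hφdef, Finset.sum_add_distrib, Finset.mul_sum]
  have hφsub : ∀ f g : P₁ → ℝ, φ (f - g) = φ f - φ g := by
    intro f g
    simp [hφdef, Finset.sum_sub_distrib]
  -- two linearly independent columns
  have hW : Module.finrank ℝ (Submodule.span ℝ (Set.range Tᵀ)) = 2 := by
    have := Matrix.rank_eq_finrank_span_cols T; rw [hrank] at this; exact this.symm
  obtain ⟨s, hsub, hspan, hind⟩ := exists_linearIndependent ℝ (Set.range Tᵀ)
  have hsfin : s.Finite := (Set.finite_range _).subset hsub
  haveI := hsfin.fintype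
  have hcard : s.toFinset.card = 2 := by
    rw [← finrank_span_set_eq_card hind, hspan]; exact hW
  obtain ⟨u, v, huv, hsuv⟩ := Finset.card_eq_two.mp hcard
  have hs_eq : s = {u, v} := by
    rw [← Set.coe_toFinset s, hsuv]; simp
  have humem : u ∈ s := by rw [hs_eq]; exact Set.mem_insert _ _
  have hvmem : v ∈ s := by rw [hs_eq]; exact Set.mem_insert_of_mem _ rfl
  have hu0 : u ≠ 0 := hind.ne_zero ⟨u, humem⟩
  have hvnotspan : v ∉ Submodule.span ℝ ({u} : Set (P₁ → ℝ)) := by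
    have hpair : LinearIndependent ℝ ((↑) : ({v, u} : Set (P₁ → ℝ)) → (P₁ → ℝ)) := by
      rw [Set.pair_comm v u, ← hs_eq]; exact hind
    exact ((linearIndepOn_id_insert
      (show v ∉ ({u} : Set (P₁ → ℝ)) by simpa using huv.symm)).mp hpair).2
  have hv0 : v ≠ 0 := fun h => hvnotspan (h ▸ Submodule.zero_mem _)
  obtain ⟨yu, hyu⟩ := hsub humem
  obtain ⟨yv, hyv⟩ := hsub hvmem
  have hucone : u ∈ orderCone P₁ := hyu ▸ hcol_cone yu
  have hvcone : v ∈ orderCone P₁ := hyv ▸ hcol_cone yv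
  have hφu : 0 < φ u := hφpos u hucone hu0
  have hφv : 0 < φ v := hφpos v hvcone hv0
  -- a separating coordinate x₀
  obtain ⟨x₀, hD⟩ : ∃ x₀, φ u * v x₀ - φ v * u x₀ ≠ 0 := by
    by_contra hcon
    push_neg at hcon
    apply hvnotspan
    rw [Submodule.mem_span_singleton]
    refine ⟨φ v / φ u, funext fun x => ?_⟩
    have hx := hcon x
    show φ v / φ u * u x = v x
    field_simp
    linarith
  -- coordinates of the columns
  have hspanpair : ∀ y, ∃ c d : ℝ, c • u + d • v = Tᵀ y := by
    intro y
    have h1 : Tᵀ y ∈ Submodule.span ℝ (Set.range Tᵀ) := Submodule.subset_span ⟨y, rfl⟩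
    rw [← hspan, hs_eq] at h1
    exact Submodule.mem_span_pair.mp h1
  choose α β hαβ using hspanpair
  -- the family of columns and column differences
  set e : P₂ ⊕ P₂ × P₂ → (P₁ → ℝ) :=
    Sum.elim (fun y => Tᵀ y) (fun p => if p.1 ≤ p.2 then Tᵀ p.2 - Tᵀ p.1 else 0) with he
  set A : P₂ ⊕ P₂ × P₂ → ℝ :=
    Sum.elim (fun y => α y) (fun p => if p.1 ≤ p.2 then α p.2 - α p.1 else 0) with hA
  set B : P₂ ⊕ P₂ × P₂ → ℝ :=
    Sum.elim (fun y => β y) (fun p => if p.1 ≤ p.2 then β p.2 - β p.1 else 0) with hB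
  have he_inl : ∀ y, e (Sum.inl y) = Tᵀ y := fun y => rfl
  have he_inr : ∀ y y', y ≤ y' → e (Sum.inr (y, y')) = Tᵀ y' - Tᵀ y := by
    intro y y' h
    show (if y ≤ y' then Tᵀ y' - Tᵀ y else 0) = Tᵀ y' - Tᵀ y
    rw [if_pos h]
  have he_cone : ∀ i, e i ∈ orderCone P₁ := by
    rintro (y | ⟨y, y'⟩)
    · exact hcol_cone y
    · by_cases h : y ≤ y'
      · rw [he_inr y y' h]; exact hdiff_cone h
      · show (if y ≤ y' then Tᵀ y' - Tᵀ y else 0) ∈ orderCone P₁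
        rw [if_neg h]; exact hzero_cone
  have he_coord : ∀ i, e i = A i • u + B i • v := by
    rintro (y | ⟨y, y'⟩)
    · exact (hαβ y).symm
    · by_cases h : y ≤ y'
      · show (if y ≤ y' then Tᵀ y' - Tᵀ y else 0) =
          (if y ≤ y' then α y' - α y else 0) • u + (if y ≤ y' then β y' - β y else 0) • v
        rw [if_pos h, if_pos h, if_pos h, ← hαβ y, ← hαβ y']
        funext x
        simp only [Pi.sub_apply, Pi.add_apply, Pi.smul_apply, smul_eq_mul]
        ring
      · show (if y ≤ y' then Tᵀ y' - Tᵀ y else 0) =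
          (if y ≤ y' then α y' - α y else 0) • u + (if y ≤ y' then β y' - β y else 0) • v
        rw [if_neg h, if_neg h, if_neg h]
        funext x
        simp
  have hφe : ∀ i, φ (e i) = A i * φ u + B i * φ v := fun i => by
    rw [he_coord i, hφ_smul_add]
  have hψe : ∀ i, e i x₀ = A i * u x₀ + B i * v x₀ := fun i => by
    rw [he_coord i]
    simp only [Pi.add_apply, Pi.smul_apply, smul_eq_mul]
  -- extremal normalized generators
  set Fs : Finset (P₂ ⊕ P₂ × P₂) := Finset.univ.filter (fun i => e i ≠ 0) with hFs
  have huFs : Sum.inl yu ∈ Fs := by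
    rw [hFs, Finset.mem_filter]
    exact ⟨Finset.mem_univ _, by rw [he_inl, hyu]; exact hu0⟩
  have hvFs : Sum.inl yv ∈ Fs := by
    rw [hFs, Finset.mem_filter]
    exact ⟨Finset.mem_univ _, by rw [he_inl, hyv]; exact hv0⟩
  have hFne : Fs.Nonempty := ⟨Sum.inl yu, huFs⟩
  have hφe_pos : ∀ i ∈ Fs, 0 < φ (e i) := by
    intro i hi
    rw [hFs, Finset.mem_filter] at hi
    exact hφpos _ (he_cone i) hi.2
  set t : P₂ ⊕ P₂ × P₂ → ℝ := fun i => e i x₀ / φ (e i) with ht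
  set tmin := Fs.inf' hFne t with htmin
  set tmax := Fs.sup' hFne t with htmax
  have hkey : ∀ i, tmin * φ (e i) ≤ e i x₀ ∧ e i x₀ ≤ tmax * φ (e i) := by
    intro i
    by_cases hi : e i = 0
    · rw [hi]
      simp [hφdef]
    · have himem : i ∈ Fs := by rw [hFs, Finset.mem_filter]; exact ⟨Finset.mem_univ _, hi⟩
      have hpos := hφe_pos i himem
      have h1 : tmin ≤ t i := Finset.inf'_le _ himem
      have h2 : t i ≤ tmax := Finset.le_sup' _ himem
      rw [ht] at h1 h2
      exact ⟨(le_div_iff₀ hpos).mp h1, (div_le_iff₀ hpos).mp h2⟩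
  -- tmin < tmax
  have htuv : t (Sum.inl yu) ≠ t (Sum.inl yv) := by
    rw [ht]
    simp only [he_inl, hyu, hyv]
    intro h
    apply hD
    field_simp at h
    linarith
  have htmm : tmin < tmax := by
    rcases lt_or_ge tmin tmax with h | h
    · exact h
    exfalso
    apply htuv
    have e1 : t (Sum.inl yu) ≤ tmax := Finset.le_sup' _ huFs
    have e2 : tmin ≤ t (Sum.inl yu) := Finset.inf'_le _ huFs
    have e3 : t (Sum.inl yv) ≤ tmax := Finset.le_sup' _ hvFs
    have e4 : tmin ≤ t (Sum.inl yv) := Finset.inf'_le _ hvFs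
    linarith
  -- facts about normalized elements of the cone
  have hnorm : ∀ i ∈ Fs,
      ((φ (e i))⁻¹ • e i) ∈ orderCone P₁ ∧
      ((φ (e i))⁻¹ * A i) * φ u + ((φ (e i))⁻¹ * B i) * φ v = 1 ∧
      ((φ (e i))⁻¹ * A i) * u x₀ + ((φ (e i))⁻¹ * B i) * v x₀ = t i ∧
      (∀ x, ((φ (e i))⁻¹ • e i) x = ((φ (e i))⁻¹ * A i) * u x + ((φ (e i))⁻¹ * B i) * v x) := by
    intro i hi
    have hpos := hφe_pos i hi
    have hne := hpos.ne'
    refine ⟨hsmul_cone _ _ (inv_nonneg.mpr hpos.le) (he_cone i), ?_, ?_, ?_⟩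
    · have h := hφe i
      field_simp
      linarith
    · have h := hψe i
      rw [ht]
      field_simp
      linarith
    · intro x
      have hx := congrFun (he_coord i) x
      simp only [Pi.add_apply, Pi.smul_apply, smul_eq_mul] at hx ⊢
      rw [hx]
      ring
  obtain ⟨imin, himin, hminval⟩ := Finset.exists_mem_eq_inf' hFne t
  obtain ⟨imax, himax, hmaxval⟩ := Finset.exists_mem_eq_sup' hFne t
  obtain ⟨hc1, hG1, hH1, hco1⟩ := hnorm imin himin
  obtain ⟨hc2, hG2, hH2, hco2⟩ := hnorm imax himax
  rw [← hminval] at hH1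
  rw [← hmaxval] at hH2
  set u₁ : P₁ → ℝ := (φ (e imin))⁻¹ • e imin with hu₁
  set u₂ : P₁ → ℝ := (φ (e imax))⁻¹ • e imax with hu₂
  set p₁ : ℝ := (φ (e imin))⁻¹ * A imin with hp₁
  set q₁ : ℝ := (φ (e imin))⁻¹ * B imin with hq₁
  set p₂ : ℝ := (φ (e imax))⁻¹ * A imax with hp₂
  set q₂ : ℝ := (φ (e imax))⁻¹ * B imax with hq₂
  set Δ : ℝ := tmax - tmin with hΔ
  have hΔpos : 0 < Δ := sub_pos.mpr htmm
  set g1 : P₂ → ℝ := fun y => (tmax * φ (Tᵀ y) - Tᵀ y x₀) / Δ with hg1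
  set g2 : P₂ → ℝ := fun y => (Tᵀ y x₀ - tmin * φ (Tᵀ y)) / Δ with hg2
  have hg1_cone : g1 ∈ orderCone P₂ := by
    constructor
    · intro y
      have hk := (hkey (Sum.inl y)).2
      rw [he_inl] at hk
      rw [hg1]
      exact div_nonneg (by linarith) hΔpos.le
    · intro y y' hyy'
      have hk := (hkey (Sum.inr (y, y'))).2
      rw [he_inr y y' hyy', hφsub] at hk
      simp only [Pi.sub_apply] at hk
      rw [hg1]
      rw [div_le_div_iff_of_pos_right hΔpos]
      linarith
  have hg2_cone : g2 ∈ orderCone P₂ := by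
    constructor
    · intro y
      have hk := (hkey (Sum.inl y)).1
      rw [he_inl] at hk
      rw [hg2]
      exact div_nonneg (by linarith) hΔpos.le
    · intro y y' hyy'
      have hk := (hkey (Sum.inr (y, y'))).1
      rw [he_inr y y' hyy', hφsub] at hk
      simp only [Pi.sub_apply] at hk
      rw [hg2]
      rw [div_le_div_iff_of_pos_right hΔpos]
      linarith
  refine ⟨![u₁, u₂], ![g1, g2], ?_, ?_, ?_⟩
  · intro i
    fin_cases i
    · simpa using hc1
    · simpa using hc2
  · intro i
    fin_cases i
    · simpa using hg1_cone
    · simpa using hg2_cone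
  · intro x y
    have hF0 : T x y = α y * u x + β y * v x := by
      have h := congrFun (hαβ y) x
      simp only [Pi.add_apply, Pi.smul_apply, smul_eq_mul] at h
      exact h.symm
    have hF1 : φ (Tᵀ y) = α y * φ u + β y * φ v := by
      rw [← hαβ y, hφ_smul_add]
    have hF2 : Tᵀ y x₀ = α y * u x₀ + β y * v x₀ := by
      rw [← hαβ y]
      simp only [Pi.add_apply, Pi.smul_apply, smul_eq_mul]
    have hc12 : g1 y + g2 y = α y * φ u + β y * φ v := by
      simp only [hg1, hg2]
      rw [hF1]
      field_simp
      ring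
    have hc12' : g1 y * tmin + g2 y * tmax = α y * u x₀ + β y * v x₀ := by
      simp only [hg1, hg2]
      rw [hF1, hF2, hΔ]
      have hΔne : tmax - tmin ≠ 0 := sub_ne_zero.mpr htmm.ne'
      field_simp
      ring
    have hEφ : (g1 y * p₁ + g2 y * p₂) * φ u + (g1 y * q₁ + g2 y * q₂) * φ v
        = α y * φ u + β y * φ v := by
      linear_combination g1 y * hG1 + g2 y * hG2 + hc12
    have hEψ : (g1 y * p₁ + g2 y * p₂) * u x₀ + (g1 y * q₁ + g2 y * q₂) * v x₀
        = α y * u x₀ + β y * v x₀ := by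
      linear_combination g1 y * hH1 + g2 y * hH2 + hc12'
    have hPα : g1 y * p₁ + g2 y * p₂ = α y := by
      have h0 : (g1 y * p₁ + g2 y * p₂ - α y) * (φ u * v x₀ - φ v * u x₀) = 0 := by
        linear_combination v x₀ * hEφ - φ v * hEψ
      have := mul_eq_zero.mp h0
      rcases this with h | h
      · linarith [sub_eq_zero.mp h]
      · exact absurd h hD
    have hQβ : g1 y * q₁ + g2 y * q₂ = β y := by
      have h0 : (g1 y * q₁ + g2 y * q₂ - β y) * (φ u * v x₀ - φ v * u x₀) = 0 := by
        linear_combination φ u * hEψ - u x₀ * hEφ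
      have := mul_eq_zero.mp h0
      rcases this with h | h
      · linarith [sub_eq_zero.mp h]
      · exact absurd h hD
    have hux1 : u₁ x = p₁ * u x + q₁ * v x := hco1 x
    have hux2 : u₂ x = p₂ * u x + q₂ * v x := hco2 x
    rw [Fin.sum_univ_two]
    simp only [Matrix.cons_val_zero, Matrix.cons_val_one, Matrix.head_cons]
    rw [hux1, hux2, hF0]
    linear_combination u x * hPα.symm + v x * hQβ.symm
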